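/- For a single observation from a two-component Gaussian mixture with the improper prior π(μ,σ) = 1/σ on the global location-scale parameter and any proper prior on the remaining parameters, the marginal likelihood is infinite; i.e., the posterior is improper for n = 1. -/

import Mathlib

open MeasureTheory Finset
open scoped ENNReal

/-- The Gaussian density with mean `m` and standard deviation `s`. -/
noncomputable def normalPDF (m s x : ℝ) : ℝ :=
  (Real.sqrt (2 * Real.pi) * s)⁻¹ * Real.exp (-((x - m) ^ 2 / (2 * s ^ 2)))

lemma normalPDF_nonneg {s : ℝ} (hs : 0 ≤ s) (m x : ℝ) : 0 ≤ normalPDF m s x := by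
  unfold normalPDF
  positivity

lemma normalPDF_eq_gaussian {s : ℝ} (hs : 0 < s) (c x : ℝ) :
    (fun μ : ℝ => normalPDF (μ + c) s x) =
      ProbabilityTheory.gaussianPDFReal (x - c) ⟨s ^ 2, sq_nonneg s⟩ := by
  ext μ
  unfold normalPDF ProbabilityTheory.gaussianPDFReal
  show (Real.sqrt (2 * Real.pi) * s)⁻¹ * Real.exp (-((x - (μ + c)) ^ 2 / (2 * s ^ 2))) =
    (Real.sqrt (2 * Real.pi * s ^ 2))⁻¹ * Real.exp (-(μ - (x - c)) ^ 2 / (2 * s ^ 2))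
  rw [Real.sqrt_mul (by positivity) (s ^ 2), Real.sqrt_sq hs.le]
  congr 1
  ring_nf

lemma lintegral_normalPDF {s : ℝ} (hs : 0 < s) (c x : ℝ) :
    ∫⁻ μ : ℝ, ENNReal.ofReal (normalPDF (μ + c) s x) = 1 := by
  have h := ProbabilityTheory.lintegral_gaussianPDFReal_eq_one (x - c)
    (v := ⟨s ^ 2, sq_nonneg s⟩) (by
      intro h0
      have h1 := congrArg (fun v : NNReal => (v : ℝ)) h0
      exact (pow_pos hs 2).ne' h1)
  rw [← h]
  exact lintegral_congr fun μ => by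
    rw [congrFun (normalPDF_eq_gaussian hs c x) μ]

lemma measurable_normalPDF_aux (a t x : ℝ) :
    Measurable (fun q : ℝ × ℝ => normalPDF (q.1 + q.2 * a) (q.2 * t) x) := by
  unfold normalPDF
  fun_prop

theorem gaussian_mixture_posterior_improper_one_obs
    {Θ : Type*} [MeasurableSpace Θ] (Q : Measure Θ) [IsProbabilityMeasure Q]
    (p α τ : Θ → Fin 2 → ℝ)
    (hp : ∀ θ i, 0 ≤ p θ i) (hpsum : ∀ θ, ∑ i, p θ i = 1)
    (hτ : ∀ θ i, 0 < τ θ i) (x₁ : ℝ) :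
    ∫⁻ θ, ∫⁻ μ, ∫⁻ σ in Set.Ioi (0 : ℝ),
        ENNReal.ofReal
          ((∑ i, p θ i * normalPDF (μ + σ * α θ i) (σ * τ θ i) x₁) * σ⁻¹)
      ∂volume ∂volume ∂Q = ⊤ := by
  have key : ∀ θ, (∫⁻ μ, ∫⁻ σ in Set.Ioi (0 : ℝ),
      ENNReal.ofReal
        ((∑ i, p θ i * normalPDF (μ + σ * α θ i) (σ * τ θ i) x₁) * σ⁻¹)
      ∂volume ∂volume) = ⊤ := by
    intro θ
    set F : ℝ → ℝ → ℝ≥0∞ := fun μ σ => ENNReal.ofReal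
        ((∑ i, p θ i * normalPDF (μ + σ * α θ i) (σ * τ θ i) x₁) * σ⁻¹) with hF
    have hmeas : Measurable (Function.uncurry F) := by
      apply Measurable.ennreal_ofReal
      apply Measurable.mul
      · apply Finset.measurable_sum
        intro i _
        exact (measurable_normalPDF_aux (α θ i) (τ θ i) x₁).const_mul _
      · exact measurable_snd.inv
    have hswap : (∫⁻ μ, ∫⁻ σ in Set.Ioi (0 : ℝ), F μ σ ∂volume ∂volume) =
        ∫⁻ σ in Set.Ioi (0 : ℝ), ∫⁻ μ, F μ σ ∂volume ∂volume := by
      exact lintegral_lintegral_swap hmeas.aemeasurable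
    rw [hswap]
    have hinner : ∀ σ ∈ Set.Ioi (0 : ℝ),
        (∫⁻ μ, F μ σ ∂volume) = ENNReal.ofReal σ⁻¹ := by
      intro σ hσ
      rw [Set.mem_Ioi] at hσ
      have hg_nonneg : ∀ μ : ℝ,
          0 ≤ ∑ i, p θ i * normalPDF (μ + σ * α θ i) (σ * τ θ i) x₁ := by
        intro μ
        refine Finset.sum_nonneg fun i _ => mul_nonneg (hp θ i) ?_
        exact normalPDF_nonneg (mul_nonneg hσ.le (hτ θ i).le) _ _
      have h1 : ∀ μ : ℝ, F μ σ =
          ENNReal.ofReal (∑ i, p θ i * normalPDF (μ + σ * α θ i) (σ * τ θ i) x₁) *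
            ENNReal.ofReal σ⁻¹ := by
        intro μ
        simp only [hF]
        exact ENNReal.ofReal_mul (hg_nonneg μ)
      simp_rw [h1]
      rw [lintegral_mul_const _ (by
        apply Measurable.ennreal_ofReal
        apply Finset.measurable_sum
        intro i _
        exact ((measurable_normalPDF_aux (α θ i) (τ θ i) x₁).comp
          (measurable_id.prodMk measurable_const)).const_mul _)]
      have h2 : (∫⁻ μ, ENNReal.ofReal
          (∑ i, p θ i * normalPDF (μ + σ * α θ i) (σ * τ θ i) x₁) ∂volume) = 1 := by
        have h3 : ∀ μ : ℝ, ENNReal.ofReal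
            (∑ i, p θ i * normalPDF (μ + σ * α θ i) (σ * τ θ i) x₁) =
            ∑ i, ENNReal.ofReal (p θ i) *
              ENNReal.ofReal (normalPDF (μ + σ * α θ i) (σ * τ θ i) x₁) := by
          intro μ
          rw [ENNReal.ofReal_sum_of_nonneg (fun i _ => mul_nonneg (hp θ i)
            (normalPDF_nonneg (mul_nonneg hσ.le (hτ θ i).le) _ _))]
          refine Finset.sum_congr rfl fun i _ => ?_
          rw [ENNReal.ofReal_mul (hp θ i)]
        simp_rw [h3]
        rw [lintegral_finset_sum _ (fun i _ => by
          apply Measurable.const_mul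
          apply Measurable.ennreal_ofReal
          exact (measurable_normalPDF_aux (α θ i) (τ θ i) x₁).comp
            (measurable_id.prodMk measurable_const))]
        have h4 : ∀ i : Fin 2, (∫⁻ μ, ENNReal.ofReal (p θ i) *
            ENNReal.ofReal (normalPDF (μ + σ * α θ i) (σ * τ θ i) x₁) ∂volume) =
            ENNReal.ofReal (p θ i) := by
          intro i
          rw [lintegral_const_mul _ (by
            apply Measurable.ennreal_ofReal
            exact (measurable_normalPDF_aux (α θ i) (τ θ i) x₁).comp
              (measurable_id.prodMk measurable_const))]
          rw [lintegral_normalPDF (mul_pos hσ (hτ θ i)) (σ * α θ i) x₁, mul_one]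
        simp_rw [h4]
        rw [← ENNReal.ofReal_sum_of_nonneg (fun i _ => hp θ i), hpsum θ,
          ENNReal.ofReal_one]
      rw [h2, one_mul]
    rw [setLIntegral_congr_fun measurableSet_Ioi hinner]
    -- ∫⁻ σ in Ioi 0, ofReal σ⁻¹ = ⊤
    by_contra h
    have hint : Integrable (fun σ : ℝ => σ⁻¹) (volume.restrict (Set.Ioi (0 : ℝ))) := by
      rw [← lintegral_ofReal_ne_top_iff_integrable
        (measurable_inv.aestronglyMeasurable) ?_]
      · exact h
      · filter_upwards [ae_restrict_mem measurableSet_Ioi] with σ hσ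
        exact inv_nonneg.mpr (le_of_lt hσ)
    exact not_IntegrableOn_Ioi_inv hint
  calc ∫⁻ θ, ∫⁻ μ, ∫⁻ σ in Set.Ioi (0 : ℝ),
        ENNReal.ofReal
          ((∑ i, p θ i * normalPDF (μ + σ * α θ i) (σ * τ θ i) x₁) * σ⁻¹)
      ∂volume ∂volume ∂Q = ∫⁻ _, (⊤ : ℝ≥0∞) ∂Q := lintegral_congr key
    _ = ⊤ := by simp
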